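/- Assume the limits L_j := lim_{ε→0⁺} ∫₀¹ u^{ε − 1 + iω} P_j(u) du exist for j = l−1, l, l+1, where l ≥ 1 is a natural number and ω is real. Then (l+1)·L_{l+1} = (2l+1) · ∫₀¹ u^{iω} P_l(u) du − l · L_{l−1}; that is, the regularized moments I_l(ω) of the Legendre polynomials satisfy the recursion (l+1)·I_{l+1}(ω) = (2l+1)·I_l(ω − i) − l·I_{l−1}(ω), where I_l(ω − i) is the (absolutely convergent) integral ∫₀¹ u^{iω} P_l(u) du. -/

import Mathlib

open MeasureTheory Filter

noncomputable section

/-- The Legendre polynomial of degree `l`, via Rodrigues' formula. -/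
def legendre (l : ℕ) (u : ℝ) : ℝ :=
  (1 / (2 ^ l * (Nat.factorial l : ℝ))) *
    iteratedDeriv l (fun x : ℝ => (x ^ 2 - 1) ^ l) u

/-- The regularized integral ∫₀¹ u^{ε−1+iω} P_j(u) du. -/
def regMoment (j : ℕ) (ω ε : ℝ) : ℂ :=
  ∫ u in Set.Ioo (0:ℝ) 1,
    Complex.exp (((ε : ℂ) - 1 + Complex.I * (ω : ℂ)) * (Real.log u : ℂ)) *
      (legendre j u : ℂ)

namespace LegAux

open Polynomial Set

def fP (l : ℕ) : Polynomial ℝ := (X ^ 2 - 1) ^ l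

def Q (l : ℕ) : Polynomial ℝ := derivative^[l] (fP l)

lemma iter_add (k : ℕ) (p q : Polynomial ℝ) :
    derivative^[k] (p + q) = derivative^[k] p + derivative^[k] q := by
  induction k generalizing p q with
  | zero => rfl
  | succ k ih =>
    rw [Function.iterate_succ_apply, derivative_add, ih,
      Function.iterate_succ_apply, Function.iterate_succ_apply]

lemma iter_deriv_X_mul (n : ℕ) : ∀ g : Polynomial ℝ,
    derivative^[n + 1] (X * g) =
      X * derivative^[n + 1] g + (n + 1 : ℕ) • derivative^[n] g := by
  induction n with
  | zero => intro g; simp [derivative_mul]; ring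
  | succ n ih =>
    intro g
    rw [Function.iterate_succ_apply, derivative_mul, derivative_X, one_mul,
      iter_add, ih]
    simp only [Nat.succ_eq_add_one, Function.iterate_succ_apply, succ_nsmul, one_smul]
    abel

lemma deriv_fP (l : ℕ) : derivative (fP (l + 1)) = C ((2 : ℝ) * (l + 1)) * (X * fP l) := by
  simp only [fP, derivative_pow, derivative_sub, derivative_one, derivative_X_pow, derivative_X, mul_one]
  push_cast
  simp only [map_mul, map_add, map_ofNat, C_1]
  ring

lemma X_mul_deriv_fP (l : ℕ) :
    X * derivative (fP (l + 1)) =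
      C ((2 : ℝ) * (l + 1)) * fP (l + 1) + C ((2 : ℝ) * (l + 1)) * fP l := by
  rw [deriv_fP]
  have h : (X : Polynomial ℝ) * (X * fP l) = fP (l + 1) + fP l := by
    simp only [fP, pow_succ]; ring
  rw [mul_left_comm, h, mul_add]


lemma fP_eq (l : ℕ) : fP l = (X - C 1) ^ l * (X + C 1) ^ l := by
  rw [fP, ← mul_pow]
  congr 1
  simp only [C_1]
  ring

lemma eval_one_iter_fP {k l : ℕ} (h : k < l) :
    (derivative^[k] (fP l)).eval 1 = 0 := by
  rw [fP_eq, Polynomial.iterate_derivative_mul, Polynomial.eval_finset_sum]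
  refine Finset.sum_eq_zero fun j hj => ?_
  rw [Polynomial.iterate_derivative_X_sub_pow]
  have hne : l - (k - j) ≠ 0 := by omega
  simp [hne, zero_pow hne]

lemma eval_one_Q (l : ℕ) : (Q l).eval 1 = 2 ^ l * (Nat.factorial l : ℝ) := by
  rw [Q, fP_eq, Polynomial.iterate_derivative_mul, Polynomial.eval_finset_sum]
  rw [Finset.sum_eq_single 0]
  · rw [Nat.sub_zero, Polynomial.iterate_derivative_X_sub_pow, Nat.sub_self,
      Nat.descFactorial_self]
    simp
    ring
  · intro j hj hj0
    rw [Polynomial.iterate_derivative_X_sub_pow]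
    have hjl : j ≤ l := Nat.lt_succ_iff.mp (Finset.mem_range.mp hj)
    have hne : l - (l - j) ≠ 0 := by omega
    simp [hne, zero_pow hne]
  · simp

lemma key1 (m : ℕ) :
    Q (m + 2) = C ((2 : ℝ) * (m + 2)) *
      (X * Q (m + 1) + (m + 1 : ℕ) • derivative^[m] (fP (m + 1))) := by
  rw [Q, Function.iterate_succ_apply, deriv_fP, Polynomial.iterate_derivative_C_mul,
    iter_deriv_X_mul, Q]
  push_cast
  ring_nf

lemma nsmul_eq_C_mul (n : ℕ) (p : Polynomial ℝ) : n • p = C (n : ℝ) * p := by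
  rw [nsmul_eq_mul, Polynomial.C_eq_natCast]

lemma star (m : ℕ) :
    X * derivative (Q (m + 1)) + C ((m : ℝ) + 1) * Q (m + 1) =
      C ((2 : ℝ) * ((m : ℝ) + 1)) * Q (m + 1) +
        C ((2 : ℝ) * ((m : ℝ) + 1)) * derivative (Q m) := by
  have h := congrArg (fun p => derivative^[m + 1] p) (X_mul_deriv_fP m)
  have e1 : derivative^[m + 1] (derivative (fP (m + 1))) = derivative (Q (m + 1)) := by
    rw [Q, ← Function.iterate_succ_apply, Function.iterate_succ_apply']
  have e2 : derivative^[m] (derivative (fP (m + 1))) = Q (m + 1) := by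
    rw [Q, ← Function.iterate_succ_apply]
  have e3 : derivative^[m + 1] (fP m) = derivative (Q m) := by
    rw [Q, Function.iterate_succ_apply']
  have e4 : derivative^[m + 1] (fP (m + 1)) = Q (m + 1) := rfl
  rw [iter_deriv_X_mul, iter_add, Polynomial.iterate_derivative_C_mul,
    Polynomial.iterate_derivative_C_mul, e1, e2, e3, e4, nsmul_eq_C_mul] at h
  convert h using 3 <;> push_cast <;> ring

lemma key1C (m : ℕ) :
    Q (m + 2) = C ((2 : ℝ) * ((m : ℝ) + 2)) *
      (X * Q (m + 1) + C ((m : ℝ) + 1) * derivative^[m] (fP (m + 1))) := by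
  have := key1 m
  rw [nsmul_eq_C_mul] at this
  convert this using 4 <;> push_cast <;> ring

lemma key2 (m : ℕ) :
    C ((m : ℝ) + 2) * derivative^[m] (fP (m + 1)) =
      X * Q (m + 1) - C (2 * ((m : ℝ) + 1)) * Q m := by
  set p := C ((m : ℝ) + 2) * derivative^[m] (fP (m + 1)) -
    (X * Q (m + 1) - C (2 * ((m : ℝ) + 1)) * Q m) with hp
  have hQd : derivative (derivative^[m] (fP (m + 1))) = Q (m + 1) := by
    rw [Q, Function.iterate_succ_apply']
  have hd : derivative p = 0 := by
    have hs := star m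
    simp only [hp, derivative_sub, derivative_mul, derivative_C, zero_mul, zero_add,
      derivative_X, one_mul, hQd]
    simp only [map_add, map_mul, map_ofNat, C_1] at hs ⊢
    linear_combination -hs
  have hc : p = C (p.coeff 0) := Polynomial.eq_C_of_derivative_eq_zero hd
  have he : p.eval 1 = 0 := by
    have h1 : (derivative^[m] (fP (m + 1))).eval 1 = 0 := eval_one_iter_fP (by omega)
    have h2 := eval_one_Q (m + 1)
    have h3 := eval_one_Q m
    simp only [hp, eval_sub, eval_mul, eval_C, eval_X, h1, h2, h3, mul_zero, one_mul]
    rw [Nat.factorial_succ]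
    push_cast
    ring
  have hc0 : p.coeff 0 = 0 := by
    rw [hc] at he; simpa using he
  have : p = 0 := by rw [hc, hc0, map_zero]
  have := sub_eq_zero.mp this
  exact this


lemma bonnet (m : ℕ) :
    C ((m : ℝ) + 2) * Q (m + 2) =
      C (2 * ((m : ℝ) + 2) * (2 * (m : ℝ) + 3)) * (X * Q (m + 1)) -
        C (4 * ((m : ℝ) + 1) ^ 2 * ((m : ℝ) + 2)) * Q m := by
  have h1 := key1C m
  have h2 := key2 m
  simp only [map_add, map_mul, map_ofNat, C_1, map_pow] at h1 h2 ⊢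
  linear_combination ((C (m : ℝ)) + 2) * h1 + (2 * ((C (m:ℝ)) + 2) * ((C (m:ℝ)) + 1)) * h2

lemma iteratedDeriv_polyeval (n : ℕ) (p : Polynomial ℝ) :
    iteratedDeriv n (fun x => p.eval x) = fun x => (derivative^[n] p).eval x := by
  induction n generalizing p with
  | zero => simp
  | succ n ih =>
    rw [iteratedDeriv_succ']
    have : (deriv fun x => p.eval x) = fun x => p.derivative.eval x :=
      funext fun x => p.deriv
    rw [this, ih, Function.iterate_succ_apply]

lemma legendre_eq (l : ℕ) (u : ℝ) :
    legendre l u = (1 / (2 ^ l * (Nat.factorial l : ℝ))) * (Q l).eval u := by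
  rw [legendre, Q]
  congr 2
  have : (fun x : ℝ => (x ^ 2 - 1) ^ l) = fun x => (fP l).eval x := by
    funext x; simp [fP]
  rw [this, iteratedDeriv_polyeval]

lemma bonnet_real (m : ℕ) (u : ℝ) :
    ((m : ℝ) + 2) * legendre (m + 2) u =
      (2 * (m : ℝ) + 3) * u * legendre (m + 1) u - ((m : ℝ) + 1) * legendre m u := by
  have h := congrArg (Polynomial.eval u) (bonnet m)
  simp only [eval_mul, eval_sub, eval_C, eval_X] at h
  simp only [legendre_eq]
  have hf2 : (Nat.factorial (m + 2) : ℝ) = ((m : ℝ) + 2) * ((m : ℝ) + 1) * Nat.factorial m := by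
    rw [Nat.factorial_succ, Nat.factorial_succ]; push_cast; ring
  have hf1 : (Nat.factorial (m + 1) : ℝ) = ((m : ℝ) + 1) * Nat.factorial m := by
    rw [Nat.factorial_succ]; push_cast; ring
  have hm0 : (Nat.factorial m : ℝ) ≠ 0 := Nat.cast_ne_zero.mpr m.factorial_ne_zero
  have h2 : (2 : ℝ) ^ m ≠ 0 := by positivity
  have hm1 : ((m : ℝ) + 1) ≠ 0 := by positivity
  have hm2 : ((m : ℝ) + 2) ≠ 0 := by positivity
  rw [pow_succ, pow_succ, hf2, hf1]
  linear_combination (norm := skip)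
    h / (4 * 2 ^ m * ((m : ℝ) + 1) * ((m : ℝ) + 2) * (Nat.factorial m : ℝ))
  field_simp
  ring


lemma legendre_continuous (l : ℕ) : Continuous (legendre l) := by
  have : legendre l = fun u => (1 / (2 ^ l * (Nat.factorial l : ℝ))) * (Q l).eval u :=
    funext (legendre_eq l)
  rw [this]
  exact continuous_const.mul (Q l).continuous
/-- continuity of the integrand -/

lemma contOn (z : ℂ) (j : ℕ) :
    ContinuousOn (fun u : ℝ => Complex.exp (z * (Real.log u : ℂ)) * (legendre j u : ℂ))
      (Ioo (0:ℝ) 1) := by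
  apply ContinuousOn.mul
  · apply Complex.continuous_exp.comp_continuousOn
    apply ContinuousOn.mul continuousOn_const
    exact Complex.continuous_ofReal.comp_continuousOn
      (Real.continuousOn_log.mono (fun u hu => ne_of_gt hu.1))
  · exact (Complex.continuous_ofReal.comp (legendre_continuous j)).continuousOn

lemma norm_exp_mul_log {z : ℂ} {u : ℝ} (hu : 0 < u) :
    ‖Complex.exp (z * (Real.log u : ℂ))‖ = u ^ z.re := by
  rw [Complex.norm_exp]
  have : (z * (Real.log u : ℂ)).re = z.re * Real.log u := by
    simp [Complex.mul_re]
  rw [this, Real.rpow_def_of_pos hu, mul_comm]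

lemma exists_bound (j : ℕ) : ∃ C : ℝ, 0 ≤ C ∧ ∀ u ∈ Icc (0:ℝ) 1, |legendre j u| ≤ C := by
  obtain ⟨x, -, hx⟩ := (isCompact_Icc (a := (0:ℝ)) (b := 1)).exists_isMaxOn
    (nonempty_Icc.mpr zero_le_one)
    ((legendre_continuous j).abs.continuousOn)
  exact ⟨|legendre j x|, abs_nonneg _, fun u hu => hx hu⟩

lemma integrable_aux (z : ℂ) (hz : -1 < z.re) (j : ℕ) :
    IntegrableOn (fun u : ℝ => Complex.exp (z * (Real.log u : ℂ)) * (legendre j u : ℂ))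
      (Ioo (0:ℝ) 1) := by
  obtain ⟨C, hC0, hC⟩ := exists_bound j
  have hg : IntegrableOn (fun u : ℝ => u ^ z.re * C) (Ioo (0:ℝ) 1) := by
    apply Integrable.mul_const
    show IntegrableOn (fun x : ℝ => x ^ z.re) (Ioo 0 1)
    have h := (intervalIntegral.intervalIntegrable_rpow' (a := (0:ℝ)) (b := 1) hz).def'
    simpa [uIoc_of_le (zero_le_one' ℝ)] using h.mono_set Ioo_subset_Ioc_self
  apply Integrable.mono' hg
    ((contOn z j).aestronglyMeasurable measurableSet_Ioo)
  rw [ae_restrict_iff' measurableSet_Ioo]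
  filter_upwards with u hu
  rw [norm_mul, norm_exp_mul_log hu.1]
  apply mul_le_mul_of_nonneg_left _ (Real.rpow_nonneg hu.1.le _)
  simpa using hC u ⟨hu.1.le, hu.2.le⟩


/-- the auxiliary integral with exponent ε + iω -/
def J (j : ℕ) (ω ε : ℝ) : ℂ :=
  ∫ u in Set.Ioo (0:ℝ) 1,
    Complex.exp (((ε : ℂ) + Complex.I * (ω : ℂ)) * (Real.log u : ℂ)) * (legendre j u : ℂ)

lemma re1 (ε ω : ℝ) : ((ε : ℂ) - 1 + Complex.I * (ω : ℂ)).re = ε - 1 := by simp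

lemma re2 (ε ω : ℝ) : ((ε : ℂ) + Complex.I * (ω : ℂ)).re = ε := by simp

lemma integrable_reg (j : ℕ) (ω : ℝ) {ε : ℝ} (hε : 0 < ε) :
    IntegrableOn (fun u : ℝ =>
      Complex.exp (((ε : ℂ) - 1 + Complex.I * (ω : ℂ)) * (Real.log u : ℂ)) *
        (legendre j u : ℂ)) (Ioo (0:ℝ) 1) :=
  integrable_aux _ (by rw [re1]; linarith) j

lemma integrable_J (j : ℕ) (ω : ℝ) {ε : ℝ} (hε : 0 ≤ ε) :
    IntegrableOn (fun u : ℝ =>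
      Complex.exp (((ε : ℂ) + Complex.I * (ω : ℂ)) * (Real.log u : ℂ)) *
        (legendre j u : ℂ)) (Ioo (0:ℝ) 1) :=
  integrable_aux _ (by rw [re2]; linarith) j

/-- the pointwise Bonnet identity under the integral -/
lemma pointwise_bonnet (m : ℕ) (ω ε : ℝ) {u : ℝ} (hu : u ∈ Ioo (0:ℝ) 1) :
    ((m : ℂ) + 2) *
        (Complex.exp (((ε : ℂ) - 1 + Complex.I * (ω : ℂ)) * (Real.log u : ℂ)) *
          (legendre (m + 2) u : ℂ)) +
      ((m : ℂ) + 1) *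
        (Complex.exp (((ε : ℂ) - 1 + Complex.I * (ω : ℂ)) * (Real.log u : ℂ)) *
          (legendre m u : ℂ)) =
      (2 * (m : ℂ) + 3) *
        (Complex.exp (((ε : ℂ) + Complex.I * (ω : ℂ)) * (Real.log u : ℂ)) *
          (legendre (m + 1) u : ℂ)) := by
  have hu0 : (0:ℝ) < u := hu.1
  have hexp : Complex.exp (((ε : ℂ) + Complex.I * (ω : ℂ)) * (Real.log u : ℂ)) =
      Complex.exp (((ε : ℂ) - 1 + Complex.I * (ω : ℂ)) * (Real.log u : ℂ)) * (u : ℂ) := by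
    have hu' : (u : ℂ) = Complex.exp ((Real.log u : ℂ)) := by
      rw [← Complex.ofReal_exp, Real.exp_log hu0]
    rw [hu', ← Complex.exp_add]
    ring_nf
  have hb : ((m : ℂ) + 2) * (legendre (m + 2) u : ℂ) =
      (2 * (m : ℂ) + 3) * (u : ℂ) * (legendre (m + 1) u : ℂ) -
        ((m : ℂ) + 1) * (legendre m u : ℂ) := by
    have := bonnet_real m u
    exact_mod_cast this
  rw [hexp]
  linear_combination Complex.exp (((ε : ℂ) - 1 + Complex.I * (ω : ℂ)) * (Real.log u : ℂ)) * hb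

/-- splitting the regularized moment via Bonnet -/
lemma split (m : ℕ) (ω : ℝ) {ε : ℝ} (hε : 0 < ε) :
    ((m : ℂ) + 2) * regMoment (m + 2) ω ε + ((m : ℂ) + 1) * regMoment m ω ε =
      (2 * (m : ℂ) + 3) * J (m + 1) ω ε := by
  rw [regMoment, regMoment, J, ← integral_const_mul, ← integral_const_mul, ← integral_const_mul,
    ← integral_add ((integrable_reg (m + 2) ω hε).const_mul _)
      ((integrable_reg m ω hε).const_mul _)]
  exact setIntegral_congr_fun measurableSet_Ioo fun u hu => pointwise_bonnet m ω ε hu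

/-- dominated convergence for J -/
lemma tendsto_J (j : ℕ) (ω : ℝ) :
    Tendsto (fun ε : ℝ => J j ω ε) (nhdsWithin 0 (Set.Ioi 0))
      (nhds (∫ u in Set.Ioo (0:ℝ) 1,
        Complex.exp ((Complex.I * (ω : ℂ)) * (Real.log u : ℂ)) * (legendre j u : ℂ))) := by
  obtain ⟨C, hC0, hC⟩ := exists_bound j
  apply tendsto_integral_filter_of_dominated_convergence (fun _ => C)
  · filter_upwards with ε
    exact (contOn _ j).aestronglyMeasurable measurableSet_Ioo
  · filter_upwards [eventually_mem_nhdsWithin] with ε (hε : ε ∈ Set.Ioi 0)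
    rw [ae_restrict_iff' measurableSet_Ioo]
    filter_upwards with u hu
    rw [norm_mul, norm_exp_mul_log hu.1, re2]
    calc u ^ ε * ‖(legendre j u : ℂ)‖ ≤ 1 * C := by
          apply mul_le_mul _ _ (norm_nonneg _) zero_le_one
          · exact Real.rpow_le_one hu.1.le hu.2.le (le_of_lt hε)
          · simpa using hC u ⟨hu.1.le, hu.2.le⟩
      _ = C := one_mul C
  · exact integrableOn_const measure_Ioo_lt_top.ne
  · rw [ae_restrict_iff' measurableSet_Ioo]
    filter_upwards with u hu
    have hcont : Continuous (fun ε : ℝ =>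
        Complex.exp (((ε : ℂ) + Complex.I * (ω : ℂ)) * (Real.log u : ℂ)) *
          (legendre j u : ℂ)) := by
      apply Continuous.mul _ continuous_const
      exact Complex.continuous_exp.comp
        ((Complex.continuous_ofReal.add continuous_const).mul continuous_const)
    have := (hcont.tendsto 0).mono_left (nhdsWithin_le_nhds (s := Set.Ioi (0:ℝ)))
    simpa using this


end LegAux

open LegAux

theorem stmt19 (l : ℕ) (hl : 1 ≤ l) (ω : ℝ) (L : ℕ → ℂ)
    (hm : Tendsto (fun ε : ℝ => regMoment (l - 1) ω ε)
      (nhdsWithin 0 (Set.Ioi 0)) (nhds (L (l - 1))))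
    (h0 : Tendsto (fun ε : ℝ => regMoment l ω ε)
      (nhdsWithin 0 (Set.Ioi 0)) (nhds (L l)))
    (hp : Tendsto (fun ε : ℝ => regMoment (l + 1) ω ε)
      (nhdsWithin 0 (Set.Ioi 0)) (nhds (L (l + 1)))) :
    ((l : ℂ) + 1) * L (l + 1) =
      (2 * (l : ℂ) + 1) *
          (∫ u in Set.Ioo (0:ℝ) 1,
            Complex.exp ((Complex.I * (ω : ℂ)) * (Real.log u : ℂ)) * (legendre l u : ℂ)) -
        (l : ℂ) * L (l - 1) := by
  obtain ⟨m, rfl⟩ : ∃ m, l = m + 1 := ⟨l - 1, (Nat.succ_pred_eq_of_pos hl).symm⟩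
  simp only [Nat.add_sub_cancel] at hm ⊢
  have hTsum : Tendsto
      (fun ε : ℝ => ((m : ℂ) + 2) * regMoment (m + 2) ω ε + ((m : ℂ) + 1) * regMoment m ω ε)
      (nhdsWithin 0 (Set.Ioi 0))
      (nhds (((m : ℂ) + 2) * L (m + 1 + 1) + ((m : ℂ) + 1) * L m)) :=
    ((hp.const_mul _).add (hm.const_mul _))
  have hT2 : Tendsto (fun ε : ℝ => (2 * (m : ℂ) + 3) * J (m + 1) ω ε)
      (nhdsWithin 0 (Set.Ioi 0))
      (nhds ((2 * (m : ℂ) + 3) * (∫ u in Set.Ioo (0:ℝ) 1,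
        Complex.exp ((Complex.I * (ω : ℂ)) * (Real.log u : ℂ)) * (legendre (m + 1) u : ℂ)))) :=
    (tendsto_J (m + 1) ω).const_mul _
  have heq : (fun ε : ℝ => ((m : ℂ) + 2) * regMoment (m + 2) ω ε +
      ((m : ℂ) + 1) * regMoment m ω ε) =ᶠ[nhdsWithin 0 (Set.Ioi 0)]
      (fun ε : ℝ => (2 * (m : ℂ) + 3) * J (m + 1) ω ε) := by
    filter_upwards [eventually_mem_nhdsWithin] with ε (hε : ε ∈ Set.Ioi 0)
    exact split m ω hε
  have hkey := tendsto_nhds_unique (hTsum.congr' heq) hT2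
  push_cast
  push_cast at hkey
  linear_combination hkey
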